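/- Let G = (V,E) be a series-parallel DAG built recursively via series and parallel combinations, and let 𝒞 be the multiset of parallel combinations (G₁,G₂) in the construction with min(s(G₁),s(G₂)) < p, where s(H) = min(p, max antichain size of H). Then ∑_{(G₁,G₂)∈𝒞} s(G₁)·s(G₂) ≤ (2p−1)·|E|. -/

import Mathlib

/-- Series-parallel DAGs, represented by their recursive construction from
single edges via series and parallel combinations. -/
inductive SP where
  | edge : SP
  | series : SP → SP → SP
  | parallel : SP → SP → SP

/-- Number of edges of a series-parallel DAG. -/
def SP.edges : SP → ℕ
  | .edge => 1
  | .series a b => a.edges + b.edges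
  | .parallel a b => a.edges + b.edges

/-- s(H) = min(p, size of the largest edge-antichain of H). -/
def SP.s (p : ℕ) : SP → ℕ
  | .edge => min 1 p
  | .series a b => max (a.s p) (b.s p)
  | .parallel a b => min (a.s p + b.s p) p

/-- Sum of s(G₁)·s(G₂) over all non-fully-formed parallel combinations
(those with min(s(G₁),s(G₂)) < p) in the recursive construction. -/
def SP.nfCost (p : ℕ) : SP → ℕ
  | .edge => 0
  | .series a b => a.nfCost p + b.nfCost p
  | .parallel a b => a.nfCost p + b.nfCost p +
      (if min (a.s p) (b.s p) < p then a.s p * b.s p else 0)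

lemma SP.s_le_p (p : ℕ) : ∀ G : SP, G.s p ≤ p
  | .edge => min_le_right _ _
  | .series a b => max_le (s_le_p p a) (s_le_p p b)
  | .parallel a b => min_le_right _ _

lemma SP.s_le_edges (p : ℕ) : ∀ G : SP, G.s p ≤ G.edges
  | .edge => min_le_left _ _
  | .series a b => max_le (le_trans (s_le_edges p a) (Nat.le_add_right _ _))
      (le_trans (s_le_edges p b) (Nat.le_add_left _ _))
  | .parallel a b => le_trans (min_le_left _ _)
      (Nat.add_le_add (s_le_edges p a) (s_le_edges p b))

lemma SP.key (p : ℕ) (hp : 0 < p) : ∀ G : SP,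
    G.nfCost p ≤ if G.s p < p then G.s p * G.edges else (2 * p - 1) * G.edges
  | .edge => by split <;> simp [SP.nfCost]
  | .series a b => by
    have ha := key p hp a
    have hb := key p hp b
    have hae := a.s_le_p p
    have hbe := b.s_le_p p
    simp only [SP.nfCost, SP.s, SP.edges]
    show a.nfCost p + b.nfCost p ≤ if max (a.s p) (b.s p) < p then max (a.s p) (b.s p) * (a.edges + b.edges) else (2 * p - 1) * (a.edges + b.edges)
    have h1 : a.s p ≤ max (a.s p) (b.s p) := le_max_left _ _
    have h2 : b.s p ≤ max (a.s p) (b.s p) := le_max_right _ _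
    split
    · next h =>
      have ha' : a.s p < p := lt_of_le_of_lt h1 h
      have hb' : b.s p < p := lt_of_le_of_lt h2 h
      rw [if_pos ha'] at ha; rw [if_pos hb'] at hb
      refine (Nat.add_le_add ha hb).trans ?_
      rw [Nat.mul_add]
      exact Nat.add_le_add (Nat.mul_le_mul_right _ h1) (Nat.mul_le_mul_right _ h2)
    · have ha' : a.nfCost p ≤ (2 * p - 1) * a.edges := by
        refine ha.trans ?_; split
        · exact Nat.mul_le_mul_right _ (le_trans hae (by omega))
        · exact le_rfl
      have hb' : b.nfCost p ≤ (2 * p - 1) * b.edges := by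
        refine hb.trans ?_; split
        · exact Nat.mul_le_mul_right _ (le_trans hbe (by omega))
        · exact le_rfl
      rw [Nat.mul_add]
      exact Nat.add_le_add ha' hb'
  | .parallel a b => by
    have ha := key p hp a
    have hb := key p hp b
    have hap := a.s_le_p p
    have hbp := b.s_le_p p
    have hae := a.s_le_edges p
    have hbe := b.s_le_edges p
    obtain ⟨q, rfl⟩ : ∃ q, p = q + 1 := ⟨p - 1, by omega⟩
    have hq : 2 * (q + 1) - 1 = 2 * q + 1 := by omega
    rw [hq] at ha hb ⊢
    simp only [SP.nfCost, SP.s, SP.edges, hq]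
    show a.nfCost (q+1) + b.nfCost (q+1) + (if min (a.s (q+1)) (b.s (q+1)) < q + 1 then a.s (q+1) * b.s (q+1) else 0) ≤ if min (a.s (q+1) + b.s (q+1)) (q+1) < q + 1 then min (a.s (q+1) + b.s (q+1)) (q+1) * (a.edges + b.edges) else (2 * q + 1) * (a.edges + b.edges)
    by_cases hmin : min (a.s (q+1)) (b.s (q+1)) < q + 1
    · rw [if_pos hmin]
      by_cases hsum : a.s (q+1) + b.s (q+1) < q + 1
      · rw [if_pos (by omega), min_eq_left (by omega)]
        rw [if_pos (by omega)] at ha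
        rw [if_pos (by omega)] at hb
        nlinarith [Nat.mul_le_mul hae (le_refl (b.s (q+1)))]
      · rw [if_neg (by omega)]
        rcases lt_or_ge (a.s (q+1)) (q+1) with ha1 | ha1
        · rw [if_pos ha1] at ha
          rcases lt_or_ge (b.s (q+1)) (q+1) with hb1 | hb1
          · rw [if_pos hb1] at hb
            have hA : a.nfCost (q+1) ≤ q * a.edges :=
              ha.trans (Nat.mul_le_mul_right _ (by omega))
            have hB : b.nfCost (q+1) ≤ q * b.edges :=
              hb.trans (Nat.mul_le_mul_right _ (by omega))
            have hC : a.s (q+1) * b.s (q+1) ≤ a.edges * q :=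
              Nat.mul_le_mul hae (by omega)
            nlinarith
          · rw [if_neg (by omega)] at hb
            have hb2 : b.s (q+1) = q + 1 := by omega
            have hA : a.nfCost (q+1) ≤ q * a.edges :=
              ha.trans (Nat.mul_le_mul_right _ (by omega))
            have hC : a.s (q+1) * b.s (q+1) ≤ a.edges * (q+1) := by
              rw [hb2]; exact Nat.mul_le_mul_right _ hae
            nlinarith
        · rw [if_neg (by omega)] at ha
          have ha2 : a.s (q+1) = q + 1 := by omega
          have hb1 : b.s (q+1) < q + 1 := by omega
          rw [if_pos hb1] at hb
          have hB : b.nfCost (q+1) ≤ q * b.edges :=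
            hb.trans (Nat.mul_le_mul_right _ (by omega))
          have hC : a.s (q+1) * b.s (q+1) ≤ (q+1) * b.edges := by
            rw [ha2]; exact Nat.mul_le_mul_left _ hbe
          nlinarith
    · rw [if_neg hmin, if_neg (by omega)]
      rw [if_neg (by omega)] at ha
      rw [if_neg (by omega)] at hb
      nlinarith

/-- Over the non-fully-formed parallel combinations of the construction of G,
∑ s(G₁)·s(G₂) ≤ (2p−1)·|E|. -/
theorem stmt4 (p : ℕ) (hp : 0 < p) (G : SP) :
    G.nfCost p ≤ (2 * p - 1) * G.edges := by
  refine (G.key p hp).trans ?_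
  split
  · exact Nat.mul_le_mul_right _ ((G.s_le_p p).trans (by omega))
  · exact le_rfl
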